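/- For real scalars a, b, c, d, the map T(ω,x) = (aω + bx, cω + dx) on pairs of real sequences is bounded on Z₂ if and only if a = d and c = 0. -/
import Mathlib


open scoped BigOperators ENNReal

noncomputable section

/-- Real sequences. -/
abbrev RSeq : Type := ℕ → ℝ

/-- Membership in ℓ². -/
def memL2 (x : RSeq) : Prop := Summable (fun n => (x n) ^ 2)

/-- The ℓ² norm. -/
noncomputable def l2norm (x : RSeq) : ℝ := Real.sqrt (∑' n, (x n) ^ 2)

/-- The Kalton–Peck map, defined coordinatewise.  (In Lean, `Real.log 0 = 0` and
division by zero is zero, so the conventions `0·log 0 = 0` and `KP 0 = 0` hold.) -/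
noncomputable def KP (x : RSeq) : RSeq := fun n => 2 * x n * Real.log (|x n| / l2norm x)

/-- Membership in the Kalton–Peck space Z₂. -/
def memZ2 (u : RSeq × RSeq) : Prop := memL2 u.2 ∧ memL2 (u.1 - KP u.2)

/-- The Z₂ quasinorm. -/
noncomputable def Z2norm (u : RSeq × RSeq) : ℝ := l2norm (u.1 - KP u.2) + l2norm u.2

/-- A map on pairs of sequences is bounded on Z₂. -/
def BoundedOnZ2 (T : RSeq × RSeq → RSeq × RSeq) : Prop :=
  (∀ u, memZ2 u → memZ2 (T u)) ∧ ∃ C : ℝ, ∀ u, memZ2 u → Z2norm (T u) ≤ C * Z2norm u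

/-- The matrix operator associated to four linear maps on sequences. -/
def matOp (α β δ γ : RSeq →ₗ[ℝ] RSeq) : RSeq × RSeq → RSeq × RSeq :=
  fun u => (α u.1 + β u.2, δ u.1 + γ u.2)

/-- Membership in the Orlicz space ℓ_f = Dom KP. -/
def memLf (x : RSeq) : Prop := memL2 x ∧ memL2 (KP x)

/-- The ℓ_f quasinorm. -/
noncomputable def lfNorm (x : RSeq) : ℝ := l2norm (KP x) + l2norm x

/-- Membership in ℓ_f* = Ran KP. -/
def memLfStar (ω : RSeq) : Prop := ∃ x : RSeq, memL2 x ∧ memL2 (ω - KP x)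

/-- The ℓ_f* quasinorm. -/
noncomputable def lfStarNorm (ω : RSeq) : ℝ :=
  sInf {r : ℝ | ∃ x : RSeq, memL2 x ∧ memL2 (ω - KP x) ∧ r = l2norm (ω - KP x) + l2norm x}

/-- A bounded map on Z₂ is strictly singular if every linear subspace of Z₂ on which it is
bounded below is finite dimensional. -/
def StrictlySingular (T : RSeq × RSeq → RSeq × RSeq) : Prop :=
  ∀ V : Submodule ℝ (RSeq × RSeq), (∀ v ∈ V, memZ2 v) →
    (∃ c > 0, ∀ v ∈ V, c * Z2norm v ≤ Z2norm (T v)) → FiniteDimensional ℝ V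

/-- A set of sequences is totally bounded (relatively compact) for the ℓ² norm. -/
def l2TotallyBounded (A : Set RSeq) : Prop :=
  ∀ ε > 0, ∃ S : Set RSeq, S.Finite ∧
    ∀ a ∈ A, ∃ s ∈ S, memL2 (a - s) ∧ l2norm (a - s) < ε

/-- A map on Z₂ is compact if the image of the unit ball is totally bounded for the
Z₂ quasinorm. -/
def CompactOnZ2 (T : RSeq × RSeq → RSeq × RSeq) : Prop :=
  ∀ ε > 0, ∃ S : Set (RSeq × RSeq), S.Finite ∧
    ∀ u, memZ2 u → Z2norm u ≤ 1 → ∃ s ∈ S, memZ2 (T u - s) ∧ Z2norm (T u - s) < ε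


lemma key_eq (x : RSeq) (n : ℕ) : ‖x n‖ ^ (2:ℝ≥0∞).toReal = (x n) ^ 2 := by
  rw [ENNReal.toReal_ofNat, Real.norm_eq_abs, Real.rpow_two, sq_abs]

lemma memL2_iff_memlp (x : RSeq) : memL2 x ↔ Memℓp x 2 := by
  rw [memℓp_gen_iff (by norm_num : 0 < (2:ℝ≥0∞).toReal)]
  constructor <;> intro h <;> refine h.congr fun n => ?_
  · exact (key_eq x n).symm
  · exact key_eq x n

lemma l2norm_eq_norm (x : RSeq) (hx : memL2 x) :
    l2norm x = ‖(⟨x, (memL2_iff_memlp x).1 hx⟩ : lp (fun _ : ℕ => ℝ) 2)‖ := by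
  set f : lp (fun _ : ℕ => ℝ) 2 := ⟨x, (memL2_iff_memlp x).1 hx⟩
  have h2 : (0:ℝ) < (2:ℝ≥0∞).toReal := by norm_num
  have h := lp.norm_rpow_eq_tsum h2 f
  have hx2 : ∑' n, (x n)^2 = ‖f‖ ^ (2:ℝ≥0∞).toReal := by
    rw [h]; exact tsum_congr fun n => (key_eq x n).symm
  rw [l2norm, hx2, ENNReal.toReal_ofNat, Real.rpow_two, Real.sqrt_sq (norm_nonneg f)]

lemma memL2_add {x y : RSeq} (hx : memL2 x) (hy : memL2 y) : memL2 (x + y) :=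
  (memL2_iff_memlp _).2 (((memL2_iff_memlp x).1 hx).add ((memL2_iff_memlp y).1 hy))

lemma l2norm_add_le {x y : RSeq} (hx : memL2 x) (hy : memL2 y) :
    l2norm (x + y) ≤ l2norm x + l2norm y := by
  rw [l2norm_eq_norm x hx, l2norm_eq_norm y hy, l2norm_eq_norm (x+y) (memL2_add hx hy)]
  exact norm_add_le (⟨x, (memL2_iff_memlp x).1 hx⟩ : lp (fun _ : ℕ => ℝ) 2)
    ⟨y, (memL2_iff_memlp y).1 hy⟩

lemma l2norm_smul (t : ℝ) (x : RSeq) : l2norm (t • x) = |t| * l2norm x := by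
  unfold l2norm
  have : ∀ n, ((t • x) n) ^ 2 = t^2 * (x n)^2 := fun n => by
    simp [Pi.smul_apply, smul_eq_mul, mul_pow]
  rw [tsum_congr this, tsum_mul_left, Real.sqrt_mul (sq_nonneg t), Real.sqrt_sq_eq_abs]

lemma memL2_smul (t : ℝ) {x : RSeq} (hx : memL2 x) : memL2 (t • x) := by
  unfold memL2
  have : ∀ n, ((t • x) n) ^ 2 = t^2 * (x n)^2 := fun n => by
    simp [Pi.smul_apply, smul_eq_mul, mul_pow]
  exact (summable_congr this).2 (hx.mul_left _)

lemma KP_smul (t : ℝ) (x : RSeq) : KP (t • x) = t • KP x := by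
  rcases eq_or_ne t 0 with rfl | ht
  · funext n; simp [KP]
  · funext n
    simp only [KP, Pi.smul_apply, smul_eq_mul]
    rw [l2norm_smul, abs_mul, mul_div_mul_left _ _ (abs_ne_zero.2 ht)]
    ring

lemma memL2_zero : memL2 0 := by simpa [memL2] using summable_zero

lemma l2norm_zero : l2norm 0 = 0 := by simp [l2norm]

lemma KP_zero : KP 0 = 0 := by funext n; simp [KP]

/-- The sequence with value `t` on `{0, ..., N-1}` and zero elsewhere. -/
def eSeq (t : ℝ) (N : ℕ) : RSeq := fun n => if n < N then t else 0

lemma memL2_eSeq (t : ℝ) (N : ℕ) : memL2 (eSeq t N) := by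
  apply summable_of_finite_support
  apply Set.Finite.subset (Set.finite_Iio N)
  intro n hn
  simp only [Function.mem_support, eSeq, Set.mem_Iio] at hn ⊢
  by_contra h
  simp [if_neg (by omega : ¬ n < N)] at hn

lemma tsum_sq_eSeq (t : ℝ) (N : ℕ) : ∑' n, (eSeq t N n)^2 = N * t^2 := by
  rw [tsum_eq_sum (s := Finset.range N) (fun n hn => by
    simp only [eSeq]; rw [if_neg (by simpa using hn)]; ring)]
  rw [Finset.sum_congr rfl (fun n hn => by
    simp only [eSeq]; rw [if_pos (Finset.mem_range.1 hn)])]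
  simp [mul_comm]

lemma l2norm_eSeq (t : ℝ) (N : ℕ) : l2norm (eSeq t N) = |t| * Real.sqrt N := by
  rw [l2norm, tsum_sq_eSeq, Real.sqrt_mul (Nat.cast_nonneg N), Real.sqrt_sq_eq_abs, mul_comm]

lemma smul_eSeq (r t : ℝ) (N : ℕ) : r • eSeq t N = eSeq (r * t) N := by
  funext n; simp only [Pi.smul_apply, smul_eq_mul, eSeq]
  split <;> simp

lemma add_eSeq (s t : ℝ) (N : ℕ) : eSeq s N + eSeq t N = eSeq (s + t) N := by
  funext n; simp only [Pi.add_apply, eSeq]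
  split <;> simp

lemma sub_eSeq (s t : ℝ) (N : ℕ) : eSeq s N - eSeq t N = eSeq (s - t) N := by
  funext n; simp only [Pi.sub_apply, eSeq]
  split <;> simp

lemma KP_eSeq (t : ℝ) (N : ℕ) : KP (eSeq t N) = eSeq (-(t * Real.log N)) N := by
  rcases eq_or_ne t 0 with rfl | ht
  · funext n; by_cases h : n < N <;> simp [KP, eSeq, h]
  funext n
  simp only [KP, eSeq, l2norm_eSeq]
  split
  · rw [div_mul_eq_div_div, div_self (abs_ne_zero.2 ht), one_div, Real.log_inv,
      Real.log_sqrt (Nat.cast_nonneg N)]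
    ring
  · simp

lemma exists_N (K : ℝ) : ∃ N : ℕ, 1 ≤ N ∧ K ≤ Real.log N := by
  refine ⟨⌈Real.exp K⌉₊ + 1, Nat.le_add_left 1 _, ?_⟩
  have h1 : Real.exp K ≤ ((⌈Real.exp K⌉₊ + 1 : ℕ) : ℝ) := by
    push_cast; linarith [Nat.le_ceil (Real.exp K)]
  calc K = Real.log (Real.exp K) := (Real.log_exp K).symm
    _ ≤ _ := Real.log_le_log (Real.exp_pos K) h1

lemma l2norm_nonneg (x : RSeq) : 0 ≤ l2norm x := Real.sqrt_nonneg _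

/-- For scalars a, b, c, d, the map T(ω,x) = (aω + bx, cω + dx) is bounded
on Z₂ if and only if a = d and c = 0. -/
theorem stmt_9 (a b c d : ℝ) :
    BoundedOnZ2 (fun u : RSeq × RSeq => (a • u.1 + b • u.2, c • u.1 + d • u.2)) ↔
      a = d ∧ c = 0 := by
  constructor
  · rintro ⟨hmap, C, hC⟩
    have hc : c = 0 := by
      by_contra hc
      have hc0 : 0 < |c| := abs_pos.2 hc
      obtain ⟨N, hN1, hlog⟩ := exists_N ((C + |a| + 1) / |c|)
      have hNR : (1:ℝ) ≤ N := by exact_mod_cast hN1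
      have hsq : 0 < Real.sqrt N := Real.sqrt_pos.2 (by linarith)
      have hlogN0 : 0 ≤ Real.log N := Real.log_nonneg hNR
      set u : RSeq × RSeq := (eSeq 1 N, 0) with hu_def
      have huZ : memZ2 u := by
        refine ⟨memL2_zero, ?_⟩
        show memL2 (eSeq 1 N - KP 0)
        rw [KP_zero, sub_zero]; exact memL2_eSeq 1 N
      have hTu : (a • u.1 + b • u.2, c • u.1 + d • u.2) = (eSeq a N, eSeq c N) := by
        show (a • eSeq 1 N + b • (0:RSeq), c • eSeq 1 N + d • (0:RSeq)) = _
        rw [smul_zero, smul_zero, add_zero, add_zero, smul_eSeq, smul_eSeq, mul_one, mul_one]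
      have hZu : Z2norm u = Real.sqrt N := by
        show l2norm (eSeq 1 N - KP 0) + l2norm 0 = _
        rw [KP_zero, sub_zero, l2norm_zero, l2norm_eSeq, add_zero, abs_one, one_mul]
      have hb := hC u huZ
      simp only [hTu, hZu] at hb
      have hZTu : Z2norm (eSeq a N, eSeq c N)
          = (|a + c * Real.log N| + |c|) * Real.sqrt N := by
        show l2norm (eSeq a N - KP (eSeq c N)) + l2norm (eSeq c N) = _
        rw [KP_eSeq, sub_eSeq, l2norm_eSeq, l2norm_eSeq, sub_neg_eq_add]
        ring
      rw [hZTu] at hb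
      have key : |a + c * Real.log N| + |c| ≤ C := le_of_mul_le_mul_right hb hsq
      have e1 : |c * Real.log N| ≤ |a + c * Real.log N| + |a| := by
        have h : |c * Real.log N| = |(a + c * Real.log N) + (-a)| := by congr 1; ring
        rw [h]
        exact (abs_add_le _ _).trans (by rw [abs_neg])
      have e2 : |c * Real.log N| = |c| * Real.log N := by
        rw [abs_mul, abs_of_nonneg hlogN0]
      have e3 : C + |a| + 1 ≤ |c| * Real.log N := by
        rw [div_le_iff₀ hc0] at hlog; linarith
      linarith [abs_nonneg c]
    refine ⟨?_, hc⟩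
    by_contra had
    have hda : 0 < |d - a| := abs_pos.2 fun h => had (by linarith [sub_eq_zero.1 h])
    obtain ⟨N, hN1, hlog⟩ := exists_N ((C + |b| + 1) / |d - a|)
    have hNR : (1:ℝ) ≤ N := by exact_mod_cast hN1
    have hsq : 0 < Real.sqrt N := Real.sqrt_pos.2 (by linarith)
    have hlogN0 : 0 ≤ Real.log N := Real.log_nonneg hNR
    set L : ℝ := Real.log N with hL
    set u : RSeq × RSeq := (eSeq (-L) N, eSeq 1 N) with hu_def
    have hKP1 : KP (eSeq 1 N) = eSeq (-L) N := by rw [KP_eSeq, one_mul]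
    have huZ : memZ2 u := by
      refine ⟨memL2_eSeq 1 N, ?_⟩
      show memL2 (eSeq (-L) N - KP (eSeq 1 N))
      rw [hKP1, sub_self]; exact memL2_zero
    have hTu : (a • u.1 + b • u.2, c • u.1 + d • u.2)
        = (eSeq (a * (-L) + b) N, eSeq d N) := by
      show (a • eSeq (-L) N + b • eSeq 1 N, c • eSeq (-L) N + d • eSeq 1 N) = _
      rw [smul_eSeq, smul_eSeq, smul_eSeq, smul_eSeq, add_eSeq, add_eSeq, mul_one, mul_one, hc]
      norm_num
    have hZu : Z2norm u = Real.sqrt N := by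
      show l2norm (eSeq (-L) N - KP (eSeq 1 N)) + l2norm (eSeq 1 N) = _
      rw [hKP1, sub_self, l2norm_zero, l2norm_eSeq, zero_add, abs_one, one_mul]
    have hb := hC u huZ
    simp only [hTu, hZu] at hb
    have hZTu : Z2norm (eSeq (a * (-L) + b) N, eSeq d N)
        = (|b + (d - a) * L| + |d|) * Real.sqrt N := by
      show l2norm (eSeq (a * (-L) + b) N - KP (eSeq d N)) + l2norm (eSeq d N) = _
      rw [KP_eSeq, sub_eSeq, l2norm_eSeq, l2norm_eSeq]
      rw [show a * (-L) + b - -(d * Real.log N) = b + (d - a) * L from by rw [← hL]; ring]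
      ring
    rw [hZTu] at hb
    have key : |b + (d - a) * L| + |d| ≤ C := le_of_mul_le_mul_right hb hsq
    have e1 : |(d - a) * L| ≤ |b + (d - a) * L| + |b| := by
      have h : |(d - a) * L| = |(b + (d - a) * L) + (-b)| := by congr 1; ring
      rw [h]
      exact (abs_add_le _ _).trans (by rw [abs_neg])
    have e2 : |(d - a) * L| = |d - a| * L := by
      rw [abs_mul, abs_of_nonneg hlogN0]
    have e3 : C + |b| + 1 ≤ |d - a| * L := by
      rw [div_le_iff₀ hda] at hlog; linarith
    linarith [abs_nonneg d]
  · rintro ⟨rfl, rfl⟩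
    constructor
    · rintro ⟨ω, x⟩ ⟨hx, hωx⟩
      refine ⟨?_, ?_⟩
      · show memL2 ((0:ℝ) • ω + a • x)
        rw [zero_smul, zero_add]
        exact memL2_smul a hx
      · show memL2 (a • ω + b • x - KP ((0:ℝ) • ω + a • x))
        rw [zero_smul, zero_add, KP_smul]
        have h : a • ω + b • x - a • KP x = a • (ω - KP x) + b • x := by
          rw [smul_sub]; abel
        rw [h]
        exact memL2_add (memL2_smul a hωx) (memL2_smul b hx)
    · refine ⟨|a| + |b|, ?_⟩
      rintro ⟨ω, x⟩ ⟨hx, hωx⟩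
      show l2norm (a • ω + b • x - KP ((0:ℝ) • ω + a • x)) + l2norm ((0:ℝ) • ω + a • x)
        ≤ (|a| + |b|) * (l2norm (ω - KP x) + l2norm x)
      rw [zero_smul, zero_add, KP_smul]
      have h : a • ω + b • x - a • KP x = a • (ω - KP x) + b • x := by
        rw [smul_sub]; abel
      rw [h, l2norm_smul]
      have h1 : l2norm (a • (ω - KP x) + b • x)
          ≤ |a| * l2norm (ω - KP x) + |b| * l2norm x := by
        calc l2norm (a • (ω - KP x) + b • x)
            ≤ l2norm (a • (ω - KP x)) + l2norm (b • x) :=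
              l2norm_add_le (memL2_smul a hωx) (memL2_smul b hx)
          _ = |a| * l2norm (ω - KP x) + |b| * l2norm x := by rw [l2norm_smul, l2norm_smul]
      have h2 := l2norm_nonneg (ω - KP x)
      have h3 := l2norm_nonneg x
      nlinarith [abs_nonneg a, abs_nonneg b]
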